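/- Let k be a field, R = k[[ℏ]] the formal power series ring, and for an R-module P let P^ = lim_n P/ℏⁿP denote its ℏ-adic completion. For any R-modules M and N, the map (M ⊗_R N)^ → (M^ ⊗_R N^)^ on ℏ-adic completions induced by the canonical maps M → M^ and N → N^ is an isomorphism of R-modules. -/

import Mathlib

open scoped TensorProduct

open scoped Pointwise

section Aux

variable {R : Type*} [CommRing R]

open AdicCompletion

lemma transitionMap_mk {M : Type*} [AddCommGroup M] [Module R M] (I : Ideal R) {m n : ℕ}
    (hmn : m ≤ n) (x : M) :
    transitionMap I M hmn (Submodule.Quotient.mk x) = Submodule.Quotient.mk x := rfl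

lemma mem_span_pow_smul_iff {M : Type*} [AddCommGroup M] [Module R M] (r : R) (k : ℕ) (x : M) :
    x ∈ ((Ideal.span {r}) ^ k • ⊤ : Submodule R M) ↔ ∃ c, r ^ k • c = x := by
  rw [Ideal.span_singleton_pow, Submodule.ideal_span_singleton_smul,
    ← SetLike.mem_coe, Submodule.coe_pointwise_smul]
  constructor
  · rintro ⟨c, -, rfl⟩
    exact ⟨c, rfl⟩
  · rintro ⟨c, rfl⟩
    exact ⟨c, trivial, rfl⟩

variable {M : Type*} [AddCommGroup M] [Module R M]
variable {N : Type*} [AddCommGroup N] [Module R N]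

lemma ker_eval_le (r : R) (n : ℕ) (y : AdicCompletion (Ideal.span {r}) M)
    (hy : y.val n = 0) : y ∈ ((Ideal.span {r}) ^ n • ⊤ :
      Submodule R (AdicCompletion (Ideal.span {r}) M)) := by
  have H : ∀ m : ℕ, ∃ b : M,
      Submodule.Quotient.mk (p := ((Ideal.span {r}) ^ (n + m) • ⊤ : Submodule R M))
      (r ^ n • b) = y.val (n + m) := by
    intro m
    obtain ⟨u, hu⟩ := Submodule.Quotient.mk_surjective _ (y.val (n + m))
    have h1 := y.property (Nat.le_add_right n m)
    rw [← hu, transitionMap_mk, hy] at h1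
    rw [Submodule.Quotient.mk_eq_zero] at h1
    obtain ⟨c, hc⟩ := (mem_span_pow_smul_iff r n u).mp h1
    exact ⟨c, by rw [hc, hu]⟩
  choose b hb using H
  have H2 : ∀ m : ℕ, ∃ d : M, r ^ (n + m) • d = r ^ n • b (m + 1) - r ^ n • b m := by
    intro m
    apply (mem_span_pow_smul_iff r (n + m) _).mp
    rw [← Submodule.Quotient.mk_eq_zero, Submodule.Quotient.mk_sub]
    have h3 := y.property (show n + m ≤ n + (m + 1) by omega)
    rw [← hb (m + 1), transitionMap_mk] at h3
    rw [hb m, h3, sub_self]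
  choose d hd using H2
  set c : ℕ → M := fun m => Nat.rec (b 0) (fun m cm => cm + r ^ m • d m) m with hc
  have hcsucc : ∀ m, c (m + 1) = c m + r ^ m • d m := fun m => rfl
  have hinv : ∀ m, r ^ n • c m = r ^ n • b m := by
    intro m
    induction m with
    | zero => rfl
    | succ m ih =>
      rw [hcsucc, smul_add, ih, smul_smul, ← pow_add, hd m]
      abel
  have hcauchy : c 0 = c 0 ∧ ∀ m, c m ≡ c (m + 1)
      [SMOD ((Ideal.span {r}) ^ m • ⊤ : Submodule R M)] := by
    refine ⟨rfl, fun m => ?_⟩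
    rw [SModEq.sub_mem, hcsucc]
    have h : c m - (c m + r ^ m • d m) = -(r ^ m • d m) := by abel
    rw [h]
    exact neg_mem ((mem_span_pow_smul_iff r m _).mpr ⟨d m, rfl⟩)
  apply (mem_span_pow_smul_iff r n y).mpr
  refine ⟨AdicCompletion.mk _ M ⟨c, by rw [isAdicCauchy_iff]; exact hcauchy.2⟩, ?_⟩
  apply AdicCompletion.ext
  intro k
  rw [val_smul_apply]
  have hzk : (AdicCompletion.mk (Ideal.span {r}) M
      ⟨c, by rw [isAdicCauchy_iff]; exact hcauchy.2⟩).val k =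
      Submodule.Quotient.mk (p := ((Ideal.span {r}) ^ k • ⊤ : Submodule R M)) (c k) := rfl
  rw [hzk, ← Submodule.Quotient.mk_smul, hinv k]
  have h5 := y.property (show k ≤ n + k by omega)
  rw [← hb k, transitionMap_mk] at h5
  exact h5

end Aux

section Aux2

variable {R : Type*} [CommRing R]
variable {M : Type*} [AddCommGroup M] [Module R M]
variable {N : Type*} [AddCommGroup N] [Module R N]
variable {M' : Type*} [AddCommGroup M'] [Module R M']
variable {N' : Type*} [AddCommGroup N'] [Module R N']

open AdicCompletion

/-- `R`-linear reduction of a linear map modulo `J • ⊤`. -/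
def rq (J : Ideal R) (g : M →ₗ[R] M') :
    M ⧸ (J • ⊤ : Submodule R M) →ₗ[R] M' ⧸ (J • ⊤ : Submodule R M') :=
  Submodule.mapQ _ _ g (fun x hx => by
    refine Submodule.smul_induction_on hx (fun r hr y _ => ?_) (fun y z hy hz => ?_)
    · rw [Submodule.mem_comap, map_smul]
      exact Submodule.smul_mem_smul hr Submodule.mem_top
    · exact Submodule.add_mem _ hy hz)

@[simp]
lemma rq_apply (J : Ideal R) (g : M →ₗ[R] M') (x : M) :
    rq J g (Submodule.Quotient.mk x) = Submodule.Quotient.mk (g x) := rfl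

lemma rq_coe (J : Ideal R) (g : M →ₗ[R] M') :
    ⇑(g.reduceModIdeal J) = ⇑(rq J g) := by
  funext x
  obtain ⟨m, rfl⟩ := Submodule.Quotient.mk_surjective _ x
  rfl

/-- reduction commutes with the transition maps. -/
lemma rq_transition (I : Ideal R) (g : M →ₗ[R] M') {m n : ℕ} (hmn : m ≤ n)
    (x : M ⧸ (I ^ n • ⊤ : Submodule R M)) :
    transitionMap I M' hmn (rq (I ^ n) g x) = rq (I ^ m) g (transitionMap I M hmn x) := by
  obtain ⟨u, rfl⟩ := Submodule.Quotient.mk_surjective _ x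
  rw [rq_apply, transitionMap_mk, transitionMap_mk, rq_apply]

/-- If all reductions are bijective, so is the induced map on adic completions. -/
lemma bijective_adic_map (I : Ideal R) (f : M →ₗ[R] M')
    (h : ∀ n : ℕ, Function.Bijective (rq (I ^ n) f)) :
    Function.Bijective (AdicCompletion.map I f) := by
  constructor
  · intro x y hxy
    apply AdicCompletion.ext
    intro n
    apply (h n).injective
    have h2 := congrArg (fun z : AdicCompletion I M' => z.val n) hxy
    simpa only [map_val_apply, rq_coe] using h2
  · intro y
    let e : ∀ n : ℕ, (M ⧸ (I ^ n • ⊤ : Submodule R M)) ≃ₗ[R]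
        (M' ⧸ (I ^ n • ⊤ : Submodule R M')) := fun n => LinearEquiv.ofBijective _ (h n)
    refine ⟨⟨fun n => (e n).symm (y.val n), ?_⟩, ?_⟩
    · intro m n hmn
      apply (h m).injective
      show rq (I ^ m) f (transitionMap I M hmn ((e n).symm (y.val n))) = rq (I ^ m) f _
      rw [← rq_transition]
      have h1 : rq (I ^ n) f ((e n).symm (y.val n)) = y.val n :=
        (e n).apply_symm_apply (y.val n)
      have h2 : rq (I ^ m) f ((e m).symm (y.val m)) = y.val m :=
        (e m).apply_symm_apply (y.val m)
      rw [h1, h2]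
      exact y.property hmn
    · apply AdicCompletion.ext
      intro n
      show (AdicCompletion.map I f _).val n = y.val n
      exact (e n).apply_symm_apply (y.val n)

end Aux2

section Aux3

variable {R : Type*} [CommRing R]
variable {M : Type*} [AddCommGroup M] [Module R M]
variable {N : Type*} [AddCommGroup N] [Module R N]
variable {M' : Type*} [AddCommGroup M'] [Module R M']
variable {N' : Type*} [AddCommGroup N'] [Module R N']

open AdicCompletion

lemma smul_top_le_ker_eval (I : Ideal R) (n : ℕ) :
    (I ^ n • ⊤ : Submodule R (AdicCompletion I M)) ≤ LinearMap.ker (eval I M n) := by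
  apply Submodule.smul_le.mpr
  intro s hs x _
  rw [LinearMap.mem_ker, map_smul]
  obtain ⟨v, hv⟩ := Submodule.Quotient.mk_surjective _ (eval I M n x)
  rw [← hv, ← Submodule.Quotient.mk_smul, Submodule.Quotient.mk_eq_zero]
  exact Submodule.smul_mem_smul hs Submodule.mem_top

/-- The reduction mod `I ^ n` of the canonical map `M → M^` is bijective for a principal
ideal `I = (r)`. -/
lemma bijective_rq_of (r : R) (n : ℕ) :
    Function.Bijective (rq ((Ideal.span {r}) ^ n)
      (AdicCompletion.of (Ideal.span {r}) M)) := by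
  constructor
  · intro x y hxy
    obtain ⟨u, rfl⟩ := Submodule.Quotient.mk_surjective _ x
    obtain ⟨v, rfl⟩ := Submodule.Quotient.mk_surjective _ y
    rw [rq_apply, rq_apply, Submodule.Quotient.eq] at hxy
    have h1 := smul_top_le_ker_eval (Ideal.span {r}) n (M := M) hxy
    rw [LinearMap.mem_ker, map_sub] at h1
    rw [Submodule.Quotient.eq]
    have h2 : eval (Ideal.span {r}) M n (AdicCompletion.of _ M u) =
        Submodule.Quotient.mk u := rfl
    have h3 : eval (Ideal.span {r}) M n (AdicCompletion.of _ M v) =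
        Submodule.Quotient.mk v := rfl
    rw [h2, h3, ← Submodule.Quotient.mk_sub, Submodule.Quotient.mk_eq_zero] at h1
    exact h1
  · intro q
    obtain ⟨y, rfl⟩ := Submodule.Quotient.mk_surjective _ q
    obtain ⟨u, hu⟩ := Submodule.Quotient.mk_surjective _ (y.val n)
    refine ⟨Submodule.Quotient.mk u, ?_⟩
    rw [rq_apply, Submodule.Quotient.eq]
    apply ker_eval_le r n
    have : (AdicCompletion.of (Ideal.span {r}) M u - y).val n =
        Submodule.Quotient.mk u - y.val n := rfl
    rw [this, hu, sub_self]

/-- `m ⊗ₜ n ∈ J • ⊤` when `m ∈ J • ⊤`. -/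
lemma tmul_mem_smul_top_left (J : Ideal R) {m : M} (hm : m ∈ (J • ⊤ : Submodule R M)) (n : N) :
    m ⊗ₜ[R] n ∈ (J • ⊤ : Submodule R (M ⊗[R] N)) := by
  refine Submodule.smul_induction_on hm (fun r hr x _ => ?_) (fun x y hx hy => ?_)
  · rw [← TensorProduct.smul_tmul']
    exact Submodule.smul_mem_smul hr Submodule.mem_top
  · rw [TensorProduct.add_tmul]
    exact Submodule.add_mem _ hx hy

lemma tmul_mem_smul_top_right (J : Ideal R) (m : M) {n : N}
    (hn : n ∈ (J • ⊤ : Submodule R N)) :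
    m ⊗ₜ[R] n ∈ (J • ⊤ : Submodule R (M ⊗[R] N)) := by
  refine Submodule.smul_induction_on hn (fun r hr x _ => ?_) (fun x y hx hy => ?_)
  · rw [TensorProduct.tmul_smul]
    exact Submodule.smul_mem_smul hr Submodule.mem_top
  · rw [TensorProduct.tmul_add]
    exact Submodule.add_mem _ hx hy

lemma range_sup_eq_smul_top (J : Ideal R) :
    (LinearMap.range (TensorProduct.map (J • ⊤ : Submodule R M).subtype
        (LinearMap.id (M := N))) ⊔
      LinearMap.range (TensorProduct.map (LinearMap.id (M := M))
        (J • ⊤ : Submodule R N).subtype)) = (J • ⊤ : Submodule R (M ⊗[R] N)) := by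
  apply le_antisymm
  · apply sup_le
    · rintro x ⟨t, rfl⟩
      induction t with
      | zero => simp
      | add a b ha hb => rw [map_add]; exact Submodule.add_mem _ ha hb
      | tmul m n =>
        obtain ⟨m, hm⟩ := m
        simpa using tmul_mem_smul_top_left J hm n
    · rintro x ⟨t, rfl⟩
      induction t with
      | zero => simp
      | add a b ha hb => rw [map_add]; exact Submodule.add_mem _ ha hb
      | tmul m n =>
        obtain ⟨n, hn⟩ := n
        simpa using tmul_mem_smul_top_right J m hn
  · apply Submodule.smul_le.mpr
    intro s hs t ht
    clear ht
    apply Submodule.mem_sup_left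
    induction t with
    | zero => rw [smul_zero]; exact Submodule.zero_mem _
    | add a b ha hb => rw [smul_add]; exact Submodule.add_mem _ ha hb
    | tmul m n =>
      refine ⟨(⟨s • m, Submodule.smul_mem_smul hs Submodule.mem_top⟩ : (J • ⊤ : Submodule R M))
        ⊗ₜ[R] n, ?_⟩
      simp [TensorProduct.smul_tmul']

/-- `(M ⧸ J•⊤) ⊗ (N ⧸ J•⊤) ≃ (M ⊗ N) ⧸ J•⊤`. -/
noncomputable def qtq (J : Ideal R) :
    ((M ⧸ (J • ⊤ : Submodule R M)) ⊗[R] (N ⧸ (J • ⊤ : Submodule R N))) ≃ₗ[R]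
      (M ⊗[R] N) ⧸ (J • ⊤ : Submodule R (M ⊗[R] N)) :=
  (TensorProduct.quotientTensorQuotientEquiv _ _).trans
    (Submodule.quotEquivOfEq _ _ (range_sup_eq_smul_top J))

@[simp]
lemma qtq_apply (J : Ideal R) (m : M) (n : N) :
    qtq J (Submodule.Quotient.mk m ⊗ₜ[R] Submodule.Quotient.mk n) =
      Submodule.Quotient.mk (m ⊗ₜ[R] n) := by
  simp [qtq, Submodule.quotEquivOfEq_mk]

lemma bijective_rq_tensor (J : Ideal R) (g : M →ₗ[R] M') (h : N →ₗ[R] N')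
    (hg : Function.Bijective (rq J g)) (hh : Function.Bijective (rq J h)) :
    Function.Bijective (rq J (TensorProduct.map g h)) := by
  let eg := LinearEquiv.ofBijective _ hg
  let eh := LinearEquiv.ofBijective _ hh
  have hcomp : (rq J (TensorProduct.map g h)) ∘ₗ (qtq J (M := M) (N := N)).toLinearMap =
      (qtq J (M := M') (N := N')).toLinearMap ∘ₗ (TensorProduct.congr eg eh).toLinearMap := by
    apply TensorProduct.ext'
    intro x y
    obtain ⟨m, rfl⟩ := Submodule.Quotient.mk_surjective _ x
    obtain ⟨n, rfl⟩ := Submodule.Quotient.mk_surjective _ y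
    simp only [LinearMap.coe_comp, Function.comp_apply, LinearEquiv.coe_coe,
      TensorProduct.congr_tmul, qtq_apply, rq_apply, TensorProduct.map_tmul]
    show Submodule.Quotient.mk (g m ⊗ₜ[R] h n) = qtq J (eg _ ⊗ₜ[R] eh _)
    have h1 : eg (Submodule.Quotient.mk m) = Submodule.Quotient.mk (g m) := rfl
    have h2 : eh (Submodule.Quotient.mk n) = Submodule.Quotient.mk (h n) := rfl
    rw [h1, h2, qtq_apply]
  have hfun : ⇑(rq J (TensorProduct.map g h)) =
      ⇑(qtq J (M := M') (N := N')) ∘ ⇑(TensorProduct.congr eg eh) ∘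
        ⇑((qtq J (M := M) (N := N)).symm) := by
    funext x
    have h3 := LinearMap.congr_fun hcomp ((qtq J (M := M) (N := N)).symm x)
    simp only [LinearMap.coe_comp, Function.comp_apply, LinearEquiv.coe_coe,
      LinearEquiv.apply_symm_apply] at h3
    exact h3
  rw [hfun]
  exact (qtq J).bijective.comp ((TensorProduct.congr eg eh).bijective.comp
    (qtq J).symm.bijective)

end Aux3

/-- Over `R = k[[ℏ]]`, for any `R`-modules `M` and `N`, the map
`(M ⊗_R N)^ → (M^ ⊗_R N^)^` between `ℏ`-adic completions induced by the canonical maps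
`M → M^` and `N → N^` is an isomorphism of `R`-modules (it is `R`-linear and bijective). -/
theorem completion_of_tensor_iso_completion_of_completed_tensor
    (k : Type*) [Field k]
    (M N : Type*) [AddCommGroup M] [Module (PowerSeries k) M]
    [AddCommGroup N] [Module (PowerSeries k) N] :
    Function.Bijective
      ⇑(AdicCompletion.map (Ideal.span {(PowerSeries.X : PowerSeries k)})
        (TensorProduct.map
          (AdicCompletion.of (Ideal.span {(PowerSeries.X : PowerSeries k)}) M)
          (AdicCompletion.of (Ideal.span {(PowerSeries.X : PowerSeries k)}) N))) := by
  apply bijective_adic_map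
  intro n
  exact bijective_rq_tensor _ _ _
    (bijective_rq_of (PowerSeries.X : PowerSeries k) n)
    (bijective_rq_of (PowerSeries.X : PowerSeries k) n)
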